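/- arXiv:1504.02937 — 2 statements merged into one kernel-verified Lean document; each statement's English description precedes it below -/
import Mathlib

section
/- Let a and b be points carrying a fixed family P(a,b) of finite sequences (paths), and suppose the following 'slim triangle' property holds abstractly in a metric space X: for every three points x₀, x₁, x₂ of X and every point c on a path in P(x₀, x₂), there is a point c* on a path in P(x₀, x₁) ∪ P(x₁, x₂) with d(c, c*) ≤ 1. Then for every sequence x₀, x₁, …, x_m of points of X with m ≤ 2^k (k ≥ 1), every point c on a path in P(x₀, x_m) satisfies: there exist an index 0 ≤ i < m and a point c* on a path in P(x_i, x_{i+1}) such that d(c, c*) ≤ k. Assume also that for m ≤ 2 the conclusion holds with bound 1 (i.e., the base case: for m = 0 or 1 any point of a path in P(x₀, x_m) is within distance 1 of some point of a path between consecutive terms). -/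
/-- Dyadic subdivision lemma: if the family of paths `P` forms 1-slim triangles
and the base case (sequences of length ≤ 2) holds with bound 1, then for any
sequence `x 0, …, x m` with `m ≤ 2 ^ k`, any point `c` on a path in
`P (x 0) (x m)` is within distance `k` of a point on a path between
consecutive terms. -/
theorem stmt_3 {X : Type*} [MetricSpace X] (P : X → X → Set (Set X))
    (hslim : ∀ x₀ x₁ x₂ : X, ∀ c : X, (∃ p ∈ P x₀ x₂, c ∈ p) →
      ∃ c' : X, ((∃ p ∈ P x₀ x₁, c' ∈ p) ∨ (∃ p ∈ P x₁ x₂, c' ∈ p)) ∧ dist c c' ≤ 1)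
    (hbase : ∀ (x : ℕ → X) (m : ℕ), m ≤ 2 → ∀ c : X, (∃ p ∈ P (x 0) (x m), c ∈ p) →
      ∃ i < m, ∃ c' : X, (∃ p ∈ P (x i) (x (i + 1)), c' ∈ p) ∧ dist c c' ≤ 1) :
    ∀ (k : ℕ), 1 ≤ k → ∀ (x : ℕ → X) (m : ℕ), m ≤ 2 ^ k →
      ∀ c : X, (∃ p ∈ P (x 0) (x m), c ∈ p) →
        ∃ i < m, ∃ c' : X, (∃ p ∈ P (x i) (x (i + 1)), c' ∈ p) ∧ dist c c' ≤ (k : ℝ) := by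
  intro k
  induction k with
  | zero => intro h; exact absurd h (by norm_num)
  | succ k ih =>
    intro _ x m hm c hc
    by_cases hk : 1 ≤ k
    · by_cases hm' : m ≤ 2 ^ k
      · obtain ⟨i, hi, c', hc', hd⟩ := ih hk x m hm' c hc
        exact ⟨i, hi, c', hc', hd.trans (by push_cast; linarith)⟩
      · -- split at j = m / 2
        set j := m / 2 with hj
        have hj1 : j ≤ 2 ^ k := by
          have : m ≤ 2 ^ (k + 1) := hm
          omega
        have hj2 : m - j ≤ 2 ^ k := by
          have : m ≤ 2 ^ (k + 1) := hm
          have : 2 ^ (k + 1) = 2 ^ k + 2 ^ k := by ring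
          omega
        obtain ⟨c', hc', hd1⟩ := hslim (x 0) (x j) (x m) c hc
        rcases hc' with h | h
        · obtain ⟨i, hi, c'', hc'', hd2⟩ := ih hk x j hj1 c' h
          refine ⟨i, by omega, c'', hc'', ?_⟩
          have := dist_triangle c c' c''
          push_cast; linarith
        · obtain ⟨i, hi, c'', hc'', hd2⟩ := ih hk (fun n => x (j + n)) (m - j) hj2 c' (by
            have : j + (m - j) = m := by omega
            show ∃ p ∈ P (x (j + 0)) (x (j + (m - j))), c' ∈ p
            rw [this, Nat.add_zero]
            exact h)
          refine ⟨j + i, by omega, c'', ?_, ?_⟩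
          · simpa [Nat.add_assoc] using hc''
          · have := dist_triangle c c' c''
            push_cast; linarith
    · have hk0 : k = 0 := by omega
      subst hk0
      obtain ⟨i, hi, c', hc', hd⟩ := hbase x m (by simpa using hm) c hc
      exact ⟨i, hi, c', hc', by simpa using hd⟩
end

section
/- Let G be a connected graph with graph metric d. Suppose that for every triple of vertices a, b, d there exist points c¹, c², c³ (one associated to each pair) such that d(cⁱ, cʲ) ≤ 1 for i ≠ j, and such that each cⁱ is within distance 6 of every geodesic joining the corresponding pair of vertices. Then every geodesic triangle in G has a 7-center, i.e., G is 7-hyperbolic. -/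
/-- If for every triple of vertices of a connected graph there are points
`c¹, c², c³`, mutually at distance at most 1, each within distance 6 of every
geodesic joining the corresponding pair, then every geodesic triangle has a
7-center. -/
theorem stmt_8 {V : Type*} (G : SimpleGraph V) (hG : G.Connected)
    (h : ∀ a b d : V, ∃ c₁ c₂ c₃ : V,
      G.dist c₁ c₂ ≤ 1 ∧ G.dist c₂ c₃ ≤ 1 ∧ G.dist c₁ c₃ ≤ 1 ∧
      (∀ w : G.Walk a b, w.length = G.dist a b → ∃ y ∈ w.support, G.dist c₁ y ≤ 6) ∧
      (∀ w : G.Walk b d, w.length = G.dist b d → ∃ y ∈ w.support, G.dist c₂ y ≤ 6) ∧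
      (∀ w : G.Walk d a, w.length = G.dist d a → ∃ y ∈ w.support, G.dist c₃ y ≤ 6)) :
    ∀ (a b d : V) (wab : G.Walk a b) (wbd : G.Walk b d) (wda : G.Walk d a),
      wab.length = G.dist a b → wbd.length = G.dist b d → wda.length = G.dist d a →
      ∃ x : V, (∃ y ∈ wab.support, G.dist x y ≤ 7) ∧
        (∃ y ∈ wbd.support, G.dist x y ≤ 7) ∧ (∃ y ∈ wda.support, G.dist x y ≤ 7) := by
  intro a b d wab wbd wda hab hbd hda
  obtain ⟨c₁, c₂, c₃, h12, h23, h13, H1, H2, H3⟩ := h a b d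
  refine ⟨c₁, ?_, ?_, ?_⟩
  · obtain ⟨y, hy, hd⟩ := H1 wab hab
    exact ⟨y, hy, by omega⟩
  · obtain ⟨y, hy, hd⟩ := H2 wbd hbd
    refine ⟨y, hy, ?_⟩
    have := hG.dist_triangle (u := c₁) (v := c₂) (w := y)
    omega
  · obtain ⟨y, hy, hd⟩ := H3 wda hda
    refine ⟨y, hy, ?_⟩
    have := hG.dist_triangle (u := c₁) (v := c₃) (w := y)
    omega
end
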